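/- arXiv:0901.0623 — 3 statements merged into one kernel-verified Lean document; each statement's English description precedes it below -/
import Mathlib

section
/- Let ν be the measure on ℝ² supported on E = ([0,∞)×{0}) ∪ ({0}×[0,∞)) with densities (4/π)·u/((1-u)²(1+u)²) on the horizontal axis and (4/π)·v/(1+v²)² on the vertical axis. For 0 < ε ≤ 1: ∫_{|y₁−1|≥ε} (y₁−1) dν(y) = (1/π)·log((2+ε)/(2−ε)) − (4/π)·ε/(4−ε²), and for ε > 1: ∫_{|y₁−1|≥ε} (y₁−1) dν(y) = (1/π)·log((2+ε)/ε) + (2/π)·1/(2+ε). -/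
open MeasureTheory Set Filter Real Topology


noncomputable def Fh : ℝ → ℝ := fun u =>
  (1 / Real.pi) * (Real.log (u - 1) - Real.log (u + 1)) - (2 / Real.pi) * (u + 1)⁻¹

lemma Fh_deriv {u : ℝ} (h1 : u ≠ 1) (h2 : u ≠ -1) :
    HasDerivAt Fh ((u - 1) * ((4 / Real.pi) * u / ((1 - u) ^ 2 * (1 + u) ^ 2))) u := by
  have h1' : u - 1 ≠ 0 := sub_ne_zero.mpr h1
  have h2' : u + 1 ≠ 0 := by intro h; apply h2; linarith [eq_neg_of_add_eq_zero_left h]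
  have h3' : 1 - u ≠ 0 := by intro h; apply h1; linarith [sub_eq_zero.mp h]
  have h4' : 1 + u ≠ 0 := by intro h; apply h2; linarith
  have hA : HasDerivAt (fun u : ℝ => Real.log (u - 1)) (1 / (u - 1)) u :=
    (((hasDerivAt_id u).sub_const 1).log h1')
  have hB : HasDerivAt (fun u : ℝ => Real.log (u + 1)) (1 / (u + 1)) u :=
    (((hasDerivAt_id u).add_const 1).log h2')
  have hC : HasDerivAt (fun u : ℝ => (u + 1)⁻¹) (-1 / (u + 1) ^ 2) u :=
    (((hasDerivAt_id u).add_const 1).inv h2')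
  have := (((hA.sub hB).const_mul (1 / Real.pi)).sub (hC.const_mul (2 / Real.pi)))
  refine this.congr_deriv ?_
  have hpi := Real.pi_ne_zero
  field_simp
  ring

lemma Fh_tendsto : Tendsto Fh atTop (𝓝 0) := by
  have h1 : Tendsto (fun u : ℝ => (u - 1) / (u + 1)) atTop (𝓝 1) := by
    have h : Tendsto (fun u : ℝ => 1 - 2 / (u + 1)) atTop (𝓝 (1 - 0)) :=
      tendsto_const_nhds.sub
        (tendsto_const_nhds.div_atTop (tendsto_atTop_add_const_right _ 1 tendsto_id))
    rw [sub_zero] at h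
    apply h.congr'
    filter_upwards [eventually_gt_atTop (0 : ℝ)] with u hu
    have : u + 1 ≠ 0 := by positivity
    field_simp
    ring
  have h2 : Tendsto (fun u : ℝ => Real.log (u - 1) - Real.log (u + 1)) atTop (𝓝 0) := by
    have h := (Real.continuousAt_log one_ne_zero).tendsto.comp h1
    rw [Real.log_one] at h
    apply h.congr'
    filter_upwards [eventually_gt_atTop (1 : ℝ)] with u hu
    have h1' : u - 1 ≠ 0 := by intro h; nlinarith [sub_eq_zero.mp h]
    have h2' : u + 1 ≠ 0 := by positivity
    simp [Function.comp, Real.log_div h1' h2']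
  have h3 : Tendsto (fun u : ℝ => (2 / Real.pi) * (u + 1)⁻¹) atTop (𝓝 ((2 / Real.pi) * 0)) :=
    Tendsto.const_mul _ (tendsto_inv_atTop_zero.comp (tendsto_atTop_add_const_right _ 1 tendsto_id))
  rw [mul_zero] at h3
  have h4 := (h2.const_mul (1 / Real.pi)).sub h3
  unfold Fh
  simpa using h4

noncomputable def Gv : ℝ → ℝ := fun v => (2 / Real.pi) * (1 + v ^ 2)⁻¹

lemma Gv_deriv (v : ℝ) :
    HasDerivAt Gv (((0:ℝ) - 1) * ((4 / Real.pi) * v / (1 + v ^ 2) ^ 2)) v := by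
  have h : (1 : ℝ) + v ^ 2 ≠ 0 := by positivity
  have hC : HasDerivAt (fun v : ℝ => (1 + v ^ 2)⁻¹)
      (-(2 * v) / (1 + v ^ 2) ^ 2) v := by
    have hp : HasDerivAt (fun v : ℝ => 1 + v ^ 2) (2 * v) v := by
      simpa using ((hasDerivAt_pow 2 v).const_add 1)
    exact hp.inv h
  have := hC.const_mul (2 / Real.pi)
  refine this.congr_deriv ?_
  have hpi := Real.pi_ne_zero
  field_simp
  ring

lemma Gv_tendsto : Tendsto Gv atTop (𝓝 0) := by
  have h : Tendsto (fun v : ℝ => (1 + v ^ 2)⁻¹) atTop (𝓝 0) := by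
    apply tendsto_inv_atTop_zero.comp
    exact tendsto_atTop_add_const_left _ 1 (tendsto_pow_atTop (by norm_num))
  have := h.const_mul (2 / Real.pi)
  unfold Gv
  simpa using this

lemma vert_integral :
    (∫ v in Ioi (0:ℝ), ((0:ℝ) - 1) * ((4 / Real.pi) * v / (1 + v ^ 2) ^ 2))
      = -(2 / Real.pi) := by
  rw [integral_Ioi_of_hasDerivAt_of_nonpos' (g := Gv)
      (fun x _ => Gv_deriv x) ?_ Gv_tendsto]
  · simp [Gv]
  · intro x hx
    have hx0 : 0 < x := hx
    have hpi : 0 < Real.pi := Real.pi_pos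
    have h1 : 0 ≤ (4 / Real.pi) * x / (1 + x ^ 2) ^ 2 := by positivity
    nlinarith

lemma tail_integral {ε : ℝ} (hε : 0 < ε) :
    (∫ u in Ioi (1 + ε), (u - 1) * ((4 / Real.pi) * u / ((1 - u) ^ 2 * (1 + u) ^ 2)))
      = (1 / Real.pi) * Real.log ((2 + ε) / ε) + (2 / Real.pi) * (1 / (2 + ε)) := by
  have hderiv : ∀ x ∈ Ici (1 + ε), HasDerivAt Fh
      ((x - 1) * ((4 / Real.pi) * x / ((1 - x) ^ 2 * (1 + x) ^ 2))) x := by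
    intro x hx
    have hx' : 1 + ε ≤ x := hx
    exact Fh_deriv (by intro h; rw [h] at hx'; linarith) (by intro h; rw [h] at hx'; linarith)
  have hpos : ∀ x ∈ Ioi (1 + ε),
      0 ≤ (x - 1) * ((4 / Real.pi) * x / ((1 - x) ^ 2 * (1 + x) ^ 2)) := by
    intro x hx
    have hx' : 1 + ε < x := hx
    have hpi : 0 < Real.pi := Real.pi_pos
    have h1 : 0 < x - 1 := by linarith
    apply mul_nonneg h1.le
    apply div_nonneg (mul_nonneg (by positivity) (by linarith)) (by positivity)
  rw [integral_Ioi_of_hasDerivAt_of_nonneg' hderiv hpos Fh_tendsto]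
  have hε2 : (2:ℝ) + ε ≠ 0 := by positivity
  have h1 : (1 + ε) - 1 = ε := by ring
  have h2 : (1 + ε) + 1 = 2 + ε := by ring
  simp only [Fh, h1, h2]
  rw [Real.log_div hε2 hε.ne']
  ring

lemma tail_integrable {ε : ℝ} (hε : 0 < ε) :
    IntegrableOn (fun u => (u - 1) * ((4 / Real.pi) * u / ((1 - u) ^ 2 * (1 + u) ^ 2)))
      (Ioi (1 + ε)) := by
  apply integrableOn_Ioi_deriv_of_nonneg' (g := Fh) ?_ ?_ Fh_tendsto
  · intro x hx
    have hx' : 1 + ε ≤ x := hx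
    exact Fh_deriv (by intro h; rw [h] at hx'; linarith) (by intro h; rw [h] at hx'; linarith)
  · intro x hx
    have hx' : 1 + ε < x := hx
    have hpi : 0 < Real.pi := Real.pi_pos
    have h1 : 0 < x - 1 := by linarith
    apply mul_nonneg h1.le
    apply div_nonneg (mul_nonneg (by positivity) (by linarith)) (by positivity)

lemma cont_on_Icc {ε : ℝ} (hε : 0 < ε) (hε1 : ε ≤ 1) :
    ContinuousOn (fun u => (u - 1) * ((4 / Real.pi) * u / ((1 - u) ^ 2 * (1 + u) ^ 2)))
      (Icc 0 (1 - ε)) := by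
  apply ContinuousOn.mul (by fun_prop)
  apply ContinuousOn.div (by fun_prop) (by fun_prop)
  intro x hx
  obtain ⟨hx0, hx1⟩ := hx
  have h1 : 1 - x ≠ 0 := by intro h; nlinarith [sub_eq_zero.mp h]
  have h2 : 1 + x ≠ 0 := by positivity
  positivity

lemma icc_integral {ε : ℝ} (hε : 0 < ε) (hε1 : ε ≤ 1) :
    (∫ u in Icc 0 (1 - ε), (u - 1) * ((4 / Real.pi) * u / ((1 - u) ^ 2 * (1 + u) ^ 2)))
      = Fh (1 - ε) - Fh 0 := by
  have hle : (0:ℝ) ≤ 1 - ε := by linarith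
  rw [integral_Icc_eq_integral_Ioc, ← intervalIntegral.integral_of_le hle]
  apply intervalIntegral.integral_eq_sub_of_hasDerivAt
  · intro x hx
    rw [Set.uIcc_of_le hle] at hx
    obtain ⟨hx0, hx1⟩ := hx
    exact Fh_deriv (by intro h; rw [h] at hx1; linarith) (by intro h; rw [h] at hx0; linarith)
  · rw [intervalIntegrable_iff_integrableOn_Icc_of_le hle]
    exact (cont_on_Icc hε hε1).integrableOn_Icc

/-- With ν on E = ([0,∞)×{0}) ∪ ({0}×[0,∞)) having densities
`(4/π)·u/((1-u)²(1+u)²)` on the horizontal axis and `(4/π)·v/(1+v²)²` on the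
vertical axis (where y₁ = 0, so |y₁−1| = 1), the integral
`∫_{|y₁−1|≥ε} (y₁−1) dν(y)` equals the stated expressions for `0 < ε ≤ 1`
and for `ε > 1`. -/
theorem stmt5 (ε : ℝ) (hε : 0 < ε) :
    (ε ≤ 1 →
      (∫ u in {u : ℝ | 0 ≤ u ∧ ε ≤ |u - 1|},
          (u - 1) * ((4 / Real.pi) * u / ((1 - u) ^ 2 * (1 + u) ^ 2)))
      + (∫ v in {v : ℝ | 0 ≤ v ∧ ε ≤ |(0 : ℝ) - 1|},
          ((0 : ℝ) - 1) * ((4 / Real.pi) * v / (1 + v ^ 2) ^ 2))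
        = (1 / Real.pi) * Real.log ((2 + ε) / (2 - ε))
          - (4 / Real.pi) * (ε / (4 - ε ^ 2))) ∧
    (1 < ε →
      (∫ u in {u : ℝ | 0 ≤ u ∧ ε ≤ |u - 1|},
          (u - 1) * ((4 / Real.pi) * u / ((1 - u) ^ 2 * (1 + u) ^ 2)))
      + (∫ v in {v : ℝ | 0 ≤ v ∧ ε ≤ |(0 : ℝ) - 1|},
          ((0 : ℝ) - 1) * ((4 / Real.pi) * v / (1 + v ^ 2) ^ 2))
        = (1 / Real.pi) * Real.log ((2 + ε) / ε)
          + (2 / Real.pi) * (1 / (2 + ε))) := by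
  constructor
  · intro hε1
    -- set equalities
    have hset1 : {u : ℝ | 0 ≤ u ∧ ε ≤ |u - 1|} = Icc 0 (1 - ε) ∪ Ici (1 + ε) := by
      ext u
      simp only [mem_setOf_eq, mem_union, mem_Icc, mem_Ici, le_abs]
      constructor
      · rintro ⟨h0, h | h⟩
        · right; linarith
        · left; exact ⟨h0, by linarith⟩
      · rintro (⟨h0, h1⟩ | h)
        · exact ⟨h0, Or.inr (by linarith)⟩
        · exact ⟨by linarith, Or.inl (by linarith)⟩
    have hset2 : {v : ℝ | 0 ≤ v ∧ ε ≤ |(0 : ℝ) - 1|} = Ici 0 := by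
      ext v
      simp only [mem_setOf_eq, mem_Ici, zero_sub, abs_neg, abs_one]
      exact ⟨fun h => h.1, fun h => ⟨h, hε1⟩⟩
    rw [hset1, hset2]
    rw [setIntegral_union ?_ measurableSet_Ici
        ((cont_on_Icc hε hε1).integrableOn_Icc)
        ((integrableOn_Ici_iff_integrableOn_Ioi).mpr (tail_integrable hε))]
    · rw [integral_Ici_eq_integral_Ioi, integral_Ici_eq_integral_Ioi,
        tail_integral hε, icc_integral hε hε1, vert_integral]
      have h1 : (1 - ε) - 1 = -ε := by ring
      have h2 : (1 - ε) + 1 = 2 - ε := by ring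
      have hε2 : (0:ℝ) < 2 - ε := by linarith
      have hε3 : (0:ℝ) < 2 + ε := by linarith
      simp only [Fh, h1, h2]
      rw [Real.log_neg_eq_log, Real.log_div hε3.ne' hε2.ne',
        Real.log_div hε3.ne' hε.ne']
      have h4 : 4 - ε ^ 2 = (2 - ε) * (2 + ε) := by ring
      rw [h4]
      have hpi := Real.pi_ne_zero
      have hz : Real.log (0 - 1) - Real.log (0 + 1) = 0 := by norm_num
      rw [hz]
      field_simp
      ring
    · rw [Set.disjoint_left]
      intro x hx1 hx2
      simp only [mem_Icc] at hx1
      simp only [mem_Ici] at hx2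
      linarith
  · intro hε1
    have hset1 : {u : ℝ | 0 ≤ u ∧ ε ≤ |u - 1|} = Ici (1 + ε) := by
      ext u
      simp only [mem_setOf_eq, mem_Ici, le_abs]
      constructor
      · rintro ⟨h0, h | h⟩
        · linarith
        · linarith
      · intro h
        exact ⟨by linarith, Or.inl (by linarith)⟩
    have hset2 : {v : ℝ | 0 ≤ v ∧ ε ≤ |(0 : ℝ) - 1|} = (∅ : Set ℝ) := by
      ext v
      simp only [mem_setOf_eq, mem_empty_iff_false, iff_false, not_and]
      intro _
      rw [show |(0:ℝ) - 1| = 1 by norm_num]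
      linarith
    rw [hset1, hset2]
    simp only [Measure.restrict_empty, integral_zero_measure, add_zero]
    rw [integral_Ici_eq_integral_Ioi, tail_integral hε]
end

section
/- With ν as above, for every ε > 0 one has |∫_{|y₁−1|≥ε} (y₁−1) dν(y)| ≤ 2/π. -/
open MeasureTheory Set Filter

/-- Derivative of the antiderivative of the horizontal density, valid for `u > 1`. -/
lemma phi_deriv (u : ℝ) (hu : 1 < u) :
    HasDerivAt (fun x : ℝ => (Real.log (x - 1) - Real.log (x + 1) - 2 / (x + 1)) / Real.pi)
      ((u - 1) * ((4 / Real.pi) * u / ((1 - u) ^ 2 * (1 + u) ^ 2))) u := by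
  have hπ := Real.pi_pos
  have hu1 : u - 1 ≠ 0 := by linarith
  have hu2 : u + 1 ≠ 0 := by linarith
  have h1 : HasDerivAt (fun x : ℝ => x - 1) 1 u := (hasDerivAt_id u).sub_const 1
  have h1' := h1.log hu1
  have h2 : HasDerivAt (fun x : ℝ => x + 1) 1 u := (hasDerivAt_id u).add_const 1
  have h2' := h2.log hu2
  have h3 : HasDerivAt (fun x : ℝ => 2 / (x + 1))
      ((0 * (u + 1) - 2 * 1) / (u + 1) ^ 2) u := (hasDerivAt_const u 2).div h2 hu2
  have h := ((h1'.sub h2').sub h3).div_const Real.pi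
  refine h.congr_deriv ?_
  have h1u : (1 : ℝ) - u ≠ 0 := by intro h; apply hu1; linarith
  field_simp
  ring

lemma psi_deriv (u : ℝ) (hu0 : -1 < u) (hu : u < 1) :
    HasDerivAt (fun x : ℝ => (Real.log (1 - x) - Real.log (1 + x) - 2 / (1 + x)) / Real.pi)
      ((u - 1) * ((4 / Real.pi) * u / ((1 - u) ^ 2 * (1 + u) ^ 2))) u := by
  have hπ := Real.pi_pos
  have hu1 : 1 - u ≠ 0 := by intro h; linarith [h]
  have hu2 : 1 + u ≠ 0 := by intro h; linarith [h]
  have h1 : HasDerivAt (fun x : ℝ => 1 - x) (-1) u := by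
    simpa using (hasDerivAt_id u).const_sub 1
  have h1' := h1.log hu1
  have h2 : HasDerivAt (fun x : ℝ => 1 + x) 1 u := by
    simpa using (hasDerivAt_id u).const_add 1
  have h2' := h2.log hu2
  have h3 : HasDerivAt (fun x : ℝ => 2 / (1 + x))
      ((0 * (1 + u) - 2 * 1) / (1 + u) ^ 2) u := (hasDerivAt_const u 2).div h2 hu2
  have h := ((h1'.sub h2').sub h3).div_const Real.pi
  refine h.congr_deriv ?_
  field_simp
  ring

lemma phi_tendsto :
    Tendsto (fun x : ℝ => (Real.log (x - 1) - Real.log (x + 1) - 2 / (x + 1)) / Real.pi)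
      atTop (nhds 0) := by
  have t1 : Tendsto (fun x : ℝ => 2 / (x + 1)) atTop (nhds 0) :=
    Tendsto.div_atTop tendsto_const_nhds (tendsto_atTop_add_const_right _ 1 tendsto_id)
  have t2 : Tendsto (fun x : ℝ => Real.log (x - 1) - Real.log (x + 1)) atTop (nhds 0) := by
    have key : Tendsto (fun x : ℝ => 1 - 2 / (x + 1)) atTop (nhds 1) := by
      simpa using t1.const_sub 1
    have hlog : Tendsto (fun x : ℝ => Real.log (1 - 2 / (x + 1))) atTop (nhds 0) := by
      have := (Real.continuousAt_log one_ne_zero).tendsto.comp key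
      simpa [Function.comp_def] using this
    apply hlog.congr'
    filter_upwards [eventually_gt_atTop (1 : ℝ)] with x hx
    have hx1 : x - 1 ≠ 0 := by intro h; linarith [h]
    have hx2 : x + 1 ≠ 0 := by intro h; linarith [h]
    rw [show (1 : ℝ) - 2 / (x + 1) = (x - 1) / (x + 1) by field_simp; ring]
    rw [Real.log_div hx1 hx2]
  have := (t2.sub t1).div_const Real.pi
  simpa using this

lemma hfun_nonneg (x : ℝ) (hx : 1 < x) :
    0 ≤ (x - 1) * ((4 / Real.pi) * x / ((1 - x) ^ 2 * (1 + x) ^ 2)) := by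
  have hπ := Real.pi_pos
  apply mul_nonneg (by linarith)
  apply div_nonneg (mul_nonneg (by positivity) (by linarith)) (by positivity)

lemma tail_val (a : ℝ) (ha : 1 < a) :
    ∫ u in Set.Ici a, (u - 1) * ((4 / Real.pi) * u / ((1 - u) ^ 2 * (1 + u) ^ 2))
      = (Real.log (a + 1) - Real.log (a - 1) + 2 / (a + 1)) / Real.pi := by
  rw [MeasureTheory.integral_Ici_eq_integral_Ioi]
  have hcont : ContinuousOn
      (fun x : ℝ => (Real.log (x - 1) - Real.log (x + 1) - 2 / (x + 1)) / Real.pi)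
      (Set.Ici a) := fun x hx =>
    (phi_deriv x (lt_of_lt_of_le ha hx)).continuousAt.continuousWithinAt
  have key := integral_Ioi_of_hasDerivAt_of_nonneg'
    (fun x hx => phi_deriv x (lt_of_lt_of_le ha hx))
    (fun x hx => hfun_nonneg x (ha.trans hx)) phi_tendsto
  rw [key]
  ring

lemma tail_int (a : ℝ) (ha : 1 < a) :
    IntegrableOn (fun u : ℝ => (u - 1) * ((4 / Real.pi) * u / ((1 - u) ^ 2 * (1 + u) ^ 2)))
      (Set.Ici a) := by
  rw [integrableOn_Ici_iff_integrableOn_Ioi]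
  exact integrableOn_Ioi_deriv_of_nonneg'
    (fun x hx => phi_deriv x (lt_of_lt_of_le ha hx))
    (fun x hx => hfun_nonneg x (ha.trans hx)) phi_tendsto

lemma lower_cont (b : ℝ) (hb0 : 0 ≤ b) (hb : b < 1) :
    ContinuousOn (fun u : ℝ => (u - 1) * ((4 / Real.pi) * u / ((1 - u) ^ 2 * (1 + u) ^ 2)))
      (Set.Icc 0 b) := by
  apply ContinuousOn.mul (by fun_prop)
  apply ContinuousOn.div (by fun_prop) (by fun_prop)
  intro x hx
  rcases hx with ⟨hx0, hx1⟩
  have h1 : (0 : ℝ) < 1 - x := by linarith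
  have h2 : (0 : ℝ) < 1 + x := by linarith
  positivity

lemma lower_val (b : ℝ) (hb0 : 0 ≤ b) (hb : b < 1) :
    ∫ u in Set.Icc 0 b, (u - 1) * ((4 / Real.pi) * u / ((1 - u) ^ 2 * (1 + u) ^ 2))
      = (Real.log (1 - b) - Real.log (1 + b) - 2 / (1 + b)) / Real.pi + 2 / Real.pi := by
  have hπ := Real.pi_pos
  rw [MeasureTheory.integral_Icc_eq_integral_Ioc,
    ← intervalIntegral.integral_of_le hb0]
  rw [intervalIntegral.integral_eq_sub_of_hasDerivAt
    (f := fun x : ℝ => (Real.log (1 - x) - Real.log (1 + x) - 2 / (1 + x)) / Real.pi)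
    (fun x hx => by
      rw [Set.uIcc_of_le hb0] at hx
      exact psi_deriv x (by linarith [hx.1]) (lt_of_le_of_lt hx.2 hb))
    (by
      apply ContinuousOn.intervalIntegrable
      rw [Set.uIcc_of_le hb0]
      exact lower_cont b hb0 hb)]
  rw [show (1 : ℝ) - 0 = 1 by ring, show (1 : ℝ) + 0 = 1 by ring, Real.log_one]
  ring

lemma vint :
    ∫ v in Set.Ici (0 : ℝ), ((0 : ℝ) - 1) * ((4 / Real.pi) * v / (1 + v ^ 2) ^ 2)
      = -(2 / Real.pi) := by
  have hπ := Real.pi_pos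
  have hderiv : ∀ v : ℝ, HasDerivAt (fun x : ℝ => -(2 / Real.pi) * (1 + x ^ 2)⁻¹)
      ((4 / Real.pi) * v / (1 + v ^ 2) ^ 2) v := by
    intro v
    have h : HasDerivAt (fun x : ℝ => 1 + x ^ 2) (2 * v) v := by
      simpa using (hasDerivAt_pow 2 v).const_add 1
    have h2 := (h.inv (by positivity)).const_mul (-(2 / Real.pi))
    refine h2.congr_deriv ?_
    have : (1 : ℝ) + v ^ 2 ≠ 0 := by positivity
    field_simp
    ring
  have htend : Tendsto (fun x : ℝ => -(2 / Real.pi) * (1 + x ^ 2)⁻¹) atTop (nhds 0) := by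
    have h : Tendsto (fun x : ℝ => 1 + x ^ 2) atTop atTop :=
      tendsto_atTop_add_const_left _ 1 (tendsto_pow_atTop two_ne_zero)
    have := (h.inv_tendsto_atTop).const_mul (-(2 / Real.pi))
    simpa using this
  have key := integral_Ioi_of_hasDerivAt_of_nonneg' (a := (0 : ℝ))
    (fun x _ => hderiv x)
    (fun x hx => by
      apply div_nonneg (mul_nonneg (by positivity) (le_of_lt hx)) (by positivity))
    htend
  rw [MeasureTheory.integral_Ici_eq_integral_Ioi]
  have hid : ∀ v : ℝ, ((0 : ℝ) - 1) * ((4 / Real.pi) * v / (1 + v ^ 2) ^ 2)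
      = -((4 / Real.pi) * v / (1 + v ^ 2) ^ 2) := fun v => by ring
  simp only [hid]
  rw [MeasureTheory.integral_neg, key]
  norm_num

/-- With ν as in the paper (densities `(4/π)·u/((1-u)²(1+u)²)` on the horizontal
axis and `(4/π)·v/(1+v²)²` on the vertical axis, where `y₁ = 0` so `|y₁−1| = 1`),
for every ε > 0, `|∫_{|y₁−1|≥ε} (y₁−1) dν(y)| ≤ 2/π`. -/
theorem stmt6 (ε : ℝ) (hε : 0 < ε) :
    |(∫ u in {u : ℝ | 0 ≤ u ∧ ε ≤ |u - 1|},
        (u - 1) * ((4 / Real.pi) * u / ((1 - u) ^ 2 * (1 + u) ^ 2)))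
      + (∫ v in {v : ℝ | 0 ≤ v ∧ ε ≤ |(0 : ℝ) - 1|},
        ((0 : ℝ) - 1) * ((4 / Real.pi) * v / (1 + v ^ 2) ^ 2))| ≤ 2 / Real.pi := by
  have hπ := Real.pi_pos
  rcases le_or_gt ε 1 with h1 | h1
  · -- case ε ≤ 1
    have hsv : {v : ℝ | 0 ≤ v ∧ ε ≤ |(0 : ℝ) - 1|} = Set.Ici 0 := by
      ext v
      simp only [Set.mem_setOf_eq, Set.mem_Ici]
      constructor
      · exact fun h => h.1
      · intro h
        refine ⟨h, ?_⟩
        rw [show |(0 : ℝ) - 1| = 1 by norm_num]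
        exact h1
    have hsu : {u : ℝ | 0 ≤ u ∧ ε ≤ |u - 1|} = Set.Icc 0 (1 - ε) ∪ Set.Ici (1 + ε) := by
      ext u
      simp only [Set.mem_setOf_eq, Set.mem_union, Set.mem_Icc, Set.mem_Ici, le_abs]
      constructor
      · rintro ⟨h0, h2 | h2⟩
        · right; linarith
        · left; exact ⟨h0, by linarith⟩
      · rintro (⟨h0, h2⟩ | h2)
        · exact ⟨h0, Or.inr (by linarith)⟩
        · exact ⟨by linarith, Or.inl (by linarith)⟩
    have hdisj : Disjoint (Set.Icc (0 : ℝ) (1 - ε)) (Set.Ici (1 + ε)) := by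
      rw [Set.disjoint_left]
      rintro x ⟨_, hx2⟩ hx3
      simp only [Set.mem_Ici] at hx3
      linarith
    have hint1 : IntegrableOn
        (fun u : ℝ => (u - 1) * ((4 / Real.pi) * u / ((1 - u) ^ 2 * (1 + u) ^ 2)))
        (Set.Icc 0 (1 - ε)) :=
      (lower_cont (1 - ε) (by linarith) (by linarith)).integrableOn_Icc
    have hint2 := tail_int (1 + ε) (by linarith)
    rw [hsu, hsv, MeasureTheory.setIntegral_union hdisj measurableSet_Ici hint1 hint2,
      lower_val (1 - ε) (by linarith) (by linarith), tail_val (1 + ε) (by linarith), vint]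
    rw [show (1 : ℝ) - (1 - ε) = ε by ring, show (1 : ℝ) + (1 - ε) = 2 - ε by ring,
      show (1 : ℝ) + ε + 1 = 2 + ε by ring, show (1 : ℝ) + ε - 1 = ε by ring]
    have heq : (Real.log ε - Real.log (2 - ε) - 2 / (2 - ε)) / Real.pi + 2 / Real.pi
        + (Real.log (2 + ε) - Real.log ε + 2 / (2 + ε)) / Real.pi + -(2 / Real.pi)
        = (Real.log (2 + ε) - Real.log (2 - ε) + (2 / (2 + ε) - 2 / (2 - ε))) / Real.pi := by
      ring
    rw [heq, abs_div, abs_of_pos hπ]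
    have hX : |Real.log (2 + ε) - Real.log (2 - ε) + (2 / (2 + ε) - 2 / (2 - ε))| ≤ 2 := by
      have l1 : Real.log (2 + ε) ≤ 1 + ε := by
        have := Real.log_le_sub_one_of_pos (show (0 : ℝ) < 2 + ε by linarith)
        linarith
      have l2 : (0 : ℝ) ≤ Real.log (2 - ε) := Real.log_nonneg (by linarith)
      have l3 : Real.log (2 - ε) ≤ Real.log (2 + ε) := by
        apply Real.log_le_log (by linarith) (by linarith)
      have l4 : 2 / (2 + ε) ≤ 2 / (2 - ε) := by
        apply div_le_div_of_nonneg_left (by norm_num) (by linarith) (by linarith)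
      have l5 : 2 / (2 - ε) ≤ 2 := by
        rw [div_le_iff₀ (by linarith)]
        nlinarith
      have l6 : (0 : ℝ) ≤ 2 / (2 + ε) := by positivity
      rw [abs_le]
      constructor <;> linarith
    gcongr
  · -- case ε > 1
    have hsv : {v : ℝ | 0 ≤ v ∧ ε ≤ |(0 : ℝ) - 1|} = (∅ : Set ℝ) := by
      ext v
      simp only [Set.mem_setOf_eq, Set.mem_empty_iff_false, iff_false, not_and]
      intro _
      rw [show |(0 : ℝ) - 1| = 1 by norm_num]
      intro h
      linarith
    have hsu : {u : ℝ | 0 ≤ u ∧ ε ≤ |u - 1|} = Set.Ici (1 + ε) := by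
      ext u
      simp only [Set.mem_setOf_eq, Set.mem_Ici, le_abs]
      constructor
      · rintro ⟨h0, h2 | h2⟩
        · linarith
        · linarith
      · intro h2
        exact ⟨by linarith, Or.inl (by linarith)⟩
    rw [hsu, hsv, Measure.restrict_empty, integral_zero_measure,
      tail_val (1 + ε) (by linarith)]
    rw [show (1 : ℝ) + ε + 1 = 2 + ε by ring, show (1 : ℝ) + ε - 1 = ε by ring, add_zero]
    rw [abs_div, abs_of_pos hπ]
    have hlog3 : Real.log 3 ≤ 4 / 3 := by
      have h := Real.log_le_sub_one_of_pos (show (0 : ℝ) < 3 / Real.exp 1 by positivity)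
      rw [Real.log_div (by norm_num) (Real.exp_ne_zero 1), Real.log_exp] at h
      have he : (2.7182818283 : ℝ) < Real.exp 1 := Real.exp_one_gt_d9
      have h2 : 3 / Real.exp 1 ≤ 4 / 3 := by
        rw [div_le_div_iff₀ (Real.exp_pos 1) (by norm_num)]
        nlinarith
      linarith
    have hld : Real.log (2 + ε) - Real.log ε ≤ Real.log 3 := by
      rw [← Real.log_div (by linarith) (by linarith)]
      apply Real.log_le_log (by positivity)
      rw [div_le_iff₀ hε]
      linarith
    have hld0 : Real.log ε ≤ Real.log (2 + ε) := Real.log_le_log (by linarith) (by linarith)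
    have h2e : 2 / (2 + ε) ≤ 2 / 3 := by
      apply div_le_div_of_nonneg_left (by norm_num) (by norm_num) (by linarith)
    have h2e0 : (0 : ℝ) ≤ 2 / (2 + ε) := by positivity
    have hX : |Real.log (2 + ε) - Real.log ε + 2 / (2 + ε)| ≤ 2 := by
      rw [abs_le]
      constructor <;> linarith
    gcongr
end

section
/- Let ν be the measure on E with densities (4/π)·u/((1-u)²(1+u)²) on the horizontal axis and (4/π)·v/(1+v²)² on the vertical axis. For every p ∈ (1,2), the p-th moment m_p := ∫_E |y₁−1|^p dν(y) is finite and satisfies m_p ≤ (4/π)·(p²−2p+2)/(p(p−1)(2−p)). -/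
open MeasureTheory Set

lemma vert_deriv (v : ℝ) : HasDerivAt (fun v : ℝ => -1/(2*(1+v^2))) (v/(1+v^2)^2) v := by
  have h0 : (0:ℝ) < 1 + v^2 := by positivity
  have h : HasDerivAt (fun v : ℝ => 2*(1+v^2)) (2*(2*v)) v := by
    simpa using (((hasDerivAt_pow 2 v).const_add 1).const_mul 2)
  have h3 := (h.inv (by positivity)).const_mul (-1 : ℝ)
  have h5 : HasDerivAt (fun v : ℝ => -1/(2*(1+v^2))) (-1 * (-(2*(2*v)) / (2*(1+v^2))^2)) v := by
    simpa [div_eq_mul_inv] using h3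
  convert h5 using 1
  field_simp

lemma vert_tendsto : Filter.Tendsto (fun v : ℝ => -1/(2*(1+v^2))) Filter.atTop (nhds 0) := by
  have h : Filter.Tendsto (fun v : ℝ => 2*(1+v^2)) Filter.atTop Filter.atTop := by
    apply Filter.Tendsto.const_mul_atTop (by norm_num)
    exact Filter.tendsto_atTop_add_const_left _ _ (Filter.tendsto_pow_atTop (by norm_num))
  simpa [neg_div, div_eq_mul_inv] using (h.inv_tendsto_atTop).neg

lemma vert_integrable : IntegrableOn (fun v : ℝ => v/(1+v^2)^2) (Ici (0:ℝ)) := by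
  rw [integrableOn_Ici_iff_integrableOn_Ioi]
  exact integrableOn_Ioi_deriv_of_nonneg ((vert_deriv 0).continuousAt.continuousWithinAt)
    (fun x _ => vert_deriv x) (fun x hx => by
      have : (0:ℝ) < x := hx
      positivity) vert_tendsto

lemma vert_value : ∫ v in Ici (0:ℝ), v/(1+v^2)^2 = 1/2 := by
  rw [integral_Ici_eq_integral_Ioi]
  rw [integral_Ioi_of_hasDerivAt_of_tendsto ((vert_deriv 0).continuousAt.continuousWithinAt)
    (fun x _ => vert_deriv x) (vert_integrable.mono_set Ioi_subset_Ici_self) vert_tendsto]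
  norm_num

namespace Stmt8Aux

variable {p : ℝ}

/-- the reduced density -/
noncomputable def g (p : ℝ) (u : ℝ) : ℝ := |u - 1| ^ (p - 2) * (u / (1 + u) ^ 2)

lemma g_meas (p : ℝ) : Measurable (g p) := by
  unfold g
  fun_prop

lemma g_nonneg {u : ℝ} (hu : 0 ≤ u) : 0 ≤ g p u := by
  unfold g
  positivity

/-- the [0,1] majorant, pre-substitution -/
noncomputable def f1 (p : ℝ) (x : ℝ) : ℝ := x ^ (p - 2) * ((1 - x) - 3/4 * (1 - x) ^ 2)

lemma f1_eq (hp1 : 1 < p) (hp2 : p < 2) :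
    EqOn (f1 p) (fun x => 1/4 * x ^ (p - 2) + 1/2 * x ^ (p - 1) - 3/4 * x ^ p) (Icc (0:ℝ) 1) := by
  intro x hx
  rcases eq_or_lt_of_le hx.1 with h0 | h0
  · subst h0
    simp [f1, Real.zero_rpow (by linarith : p - 2 ≠ 0),
      Real.zero_rpow (by linarith : p - 1 ≠ 0), Real.zero_rpow (by linarith : p ≠ 0)]
  · have hx0 : x ≠ 0 := ne_of_gt h0
    have e1 : x ^ (p - 1) = x ^ (p - 2) * x := by
      rw [← Real.rpow_add_one hx0 (p - 2)]; congr 1; ring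
    have e2 : x ^ p = x ^ (p - 2) * x * x := by
      rw [← Real.rpow_add_one hx0 (p - 2), ← Real.rpow_add_one hx0 (p - 2 + 1)]
      congr 1; ring
    simp only [f1, e1, e2]
    ring

lemma f1_intInt (hp1 : 1 < p) (hp2 : p < 2) :
    IntervalIntegrable (f1 p) volume 0 1 := by
  have h : IntervalIntegrable
      (fun x : ℝ => 1/4 * x ^ (p - 2) + 1/2 * x ^ (p - 1) - 3/4 * x ^ p) volume 0 1 := by
    exact (((intervalIntegral.intervalIntegrable_rpow' (by linarith)).const_mul (1/4)).add
      ((intervalIntegral.intervalIntegrable_rpow' (by linarith)).const_mul (1/2))).sub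
      ((intervalIntegral.intervalIntegrable_rpow' (by linarith)).const_mul (3/4))
  rw [intervalIntegrable_iff_integrableOn_Icc_of_le zero_le_one] at h ⊢
  exact h.congr_fun (f1_eq hp1 hp2).symm measurableSet_Icc

lemma f1_integral (hp1 : 1 < p) (hp2 : p < 2) :
    ∫ x in (0:ℝ)..1, f1 p x = 1/(4*(p-1)) + 1/(2*p) - 3/(4*(p+1)) := by
  rw [intervalIntegral.integral_congr (g := fun x => 1/4 * x ^ (p - 2) + 1/2 * x ^ (p - 1) - 3/4 * x ^ p)
    (by rw [uIcc_of_le zero_le_one]; exact f1_eq hp1 hp2)]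
  have i1 : IntervalIntegrable (fun x : ℝ => (1:ℝ)/4 * x ^ (p-2)) volume 0 1 :=
    (intervalIntegral.intervalIntegrable_rpow' (by linarith)).const_mul _
  have i2 : IntervalIntegrable (fun x : ℝ => (1:ℝ)/2 * x ^ (p-1)) volume 0 1 :=
    (intervalIntegral.intervalIntegrable_rpow' (by linarith)).const_mul _
  have i3 : IntervalIntegrable (fun x : ℝ => (3:ℝ)/4 * x ^ p) volume 0 1 :=
    (intervalIntegral.intervalIntegrable_rpow' (by linarith)).const_mul _
  rw [intervalIntegral.integral_sub (i1.add i2) i3, intervalIntegral.integral_add i1 i2,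
    intervalIntegral.integral_const_mul, intervalIntegral.integral_const_mul,
    intervalIntegral.integral_const_mul,
    integral_rpow (Or.inl (by linarith)), integral_rpow (Or.inl (by linarith)),
    integral_rpow (Or.inl (by linarith))]
  rw [Real.one_rpow, Real.one_rpow, Real.one_rpow,
    Real.zero_rpow (by linarith : p - 2 + 1 ≠ 0), Real.zero_rpow (by linarith : p - 1 + 1 ≠ 0),
    Real.zero_rpow (by linarith : p + 1 ≠ 0)]
  have h1 : p - 2 + 1 = p - 1 := by ring
  have h2 : p - 1 + 1 = p := by ring
  rw [h1, h2]
  field_simp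
  ring

end Stmt8Aux

namespace Stmt8Aux2
open Stmt8Aux

variable {p : ℝ}

lemma maj1_intOn (hp1 : 1 < p) (hp2 : p < 2) :
    IntegrableOn (fun u : ℝ => f1 p (1 - u)) (Icc (0:ℝ) 1) := by
  have h := (f1_intInt hp1 hp2).comp_sub_left 1
  have h2 : IntervalIntegrable (fun u : ℝ => f1 p (1 - u)) volume 0 1 := by
    simpa using h.symm
  exact (intervalIntegrable_iff_integrableOn_Icc_of_le zero_le_one).mp h2

lemma g_le1 (hp1 : 1 < p) (hp2 : p < 2) :
    ∀ u ∈ Icc (0:ℝ) 1, g p u ≤ f1 p (1 - u) := by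
  intro u hu
  have h1 : |u - 1| = 1 - u := by
    rw [abs_sub_comm, abs_of_nonneg (by linarith [hu.2])]
  have e : (1 : ℝ) - (1 - u) = u := by ring
  unfold g f1
  rw [h1, e]
  apply mul_le_mul_of_nonneg_left ?_ (Real.rpow_nonneg (by linarith [hu.2]) _)
  rw [div_le_iff₀ (by nlinarith [hu.1] : (0:ℝ) < (1 + u) ^ 2)]
  nlinarith [mul_nonneg (mul_nonneg (mul_nonneg hu.1 hu.1) (sub_nonneg.2 hu.2))
    (by linarith [hu.1] : (0:ℝ) ≤ 5 + 3 * u)]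

lemma g_int1 (hp1 : 1 < p) (hp2 : p < 2) : IntegrableOn (g p) (Icc (0:ℝ) 1) := by
  refine Integrable.mono' (maj1_intOn hp1 hp2) ((g_meas p).aestronglyMeasurable) ?_
  refine (ae_restrict_iff' measurableSet_Icc).2 (ae_of_all _ fun u hu => ?_)
  rw [Real.norm_eq_abs, abs_of_nonneg (g_nonneg hu.1)]
  exact g_le1 hp1 hp2 u hu

lemma g_bound1 (hp1 : 1 < p) (hp2 : p < 2) :
    ∫ u in Icc (0:ℝ) 1, g p u ≤ 1/(4*(p-1)) + 1/(2*p) - 3/(4*(p+1)) := by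
  have h := setIntegral_mono_on (g_int1 hp1 hp2) (maj1_intOn hp1 hp2) measurableSet_Icc
    (g_le1 hp1 hp2)
  refine h.trans (le_of_eq ?_)
  rw [integral_Icc_eq_integral_Ioc, ← intervalIntegral.integral_of_le zero_le_one,
    intervalIntegral.integral_comp_sub_left (f1 p) 1]
  norm_num [f1_integral hp1 hp2]

lemma maj2_intOn (hp1 : 1 < p) (hp2 : p < 2) :
    IntegrableOn (fun u : ℝ => 1/4 * (u - 1) ^ (p - 2)) (Ioc (1:ℝ) 2) := by
  have h : IntervalIntegrable (fun x : ℝ => x ^ (p-2)) volume 0 1 :=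
    intervalIntegral.intervalIntegrable_rpow' (by linarith)
  have h2 := (h.comp_sub_right 1).const_mul (1/4 : ℝ)
  have h3 : IntervalIntegrable (fun u : ℝ => 1/4 * (u - 1) ^ (p - 2)) volume 1 2 := by
    simpa [show (1:ℝ) + 1 = 2 by norm_num] using h2
  exact ((intervalIntegrable_iff_integrableOn_Icc_of_le one_le_two).mp h3).mono_set
    Ioc_subset_Icc_self

lemma g_le2 (hp1 : 1 < p) (hp2 : p < 2) :
    ∀ u ∈ Ioc (1:ℝ) 2, g p u ≤ 1/4 * (u - 1) ^ (p - 2) := by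
  intro u hu
  have h1 : |u - 1| = u - 1 := abs_of_nonneg (by linarith [hu.1])
  unfold g
  rw [h1, mul_comm (1/4 : ℝ)]
  apply mul_le_mul_of_nonneg_left ?_ (Real.rpow_nonneg (by linarith [hu.1]) _)
  rw [div_le_iff₀ (by nlinarith [hu.1] : (0:ℝ) < (1 + u) ^ 2)]
  nlinarith [sq_nonneg (1 - u)]

lemma g_int2 (hp1 : 1 < p) (hp2 : p < 2) : IntegrableOn (g p) (Ioc (1:ℝ) 2) := by
  refine Integrable.mono' (maj2_intOn hp1 hp2) ((g_meas p).aestronglyMeasurable) ?_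
  refine (ae_restrict_iff' measurableSet_Ioc).2 (ae_of_all _ fun u hu => ?_)
  rw [Real.norm_eq_abs, abs_of_nonneg (g_nonneg (by linarith [hu.1]))]
  exact g_le2 hp1 hp2 u hu

lemma g_bound2 (hp1 : 1 < p) (hp2 : p < 2) :
    ∫ u in Ioc (1:ℝ) 2, g p u ≤ 1/(4*(p-1)) := by
  have h := setIntegral_mono_on (g_int2 hp1 hp2) (maj2_intOn hp1 hp2) measurableSet_Ioc
    (g_le2 hp1 hp2)
  refine h.trans (le_of_eq ?_)
  rw [← intervalIntegral.integral_of_le one_le_two, intervalIntegral.integral_const_mul,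
    intervalIntegral.integral_comp_sub_right (fun x : ℝ => x ^ (p-2)) 1]
  norm_num
  rw [integral_rpow (Or.inl (by linarith))]
  rw [Real.one_rpow, Real.zero_rpow (by linarith : p - 2 + 1 ≠ 0)]
  have h1 : p - 2 + 1 = p - 1 := by ring
  rw [h1]
  ring

lemma maj3_intOn (hp1 : 1 < p) (hp2 : p < 2) :
    IntegrableOn (fun u : ℝ => u ^ (p - 3)) (Ioi (2:ℝ)) :=
  integrableOn_Ioi_rpow_of_lt (by linarith) (by norm_num)

lemma g_le3 (hp1 : 1 < p) (hp2 : p < 2) :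
    ∀ u ∈ Ioi (2:ℝ), g p u ≤ u ^ (p - 3) := by
  intro u hu
  have hu2 : (2:ℝ) < u := hu
  have hu0 : (0:ℝ) < u := by linarith
  have h1 : |u - 1| = u - 1 := abs_of_nonneg (by linarith)
  have e : (u - 1) ^ (p - 2) = (u - 1) ^ (p - 1) / (u - 1) := by
    rw [← Real.rpow_sub_one (by linarith : u - 1 ≠ 0)]; congr 1; ring
  have h2 : (u - 1) ^ (p - 1) ≤ u ^ (p - 1) :=
    Real.rpow_le_rpow (by linarith) (by linarith) (by linarith)
  have hpow : (0:ℝ) ≤ u ^ (p - 1) := Real.rpow_nonneg (le_of_lt hu0) _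
  have e2 : u ^ (p - 3) = u ^ (p - 1) / u ^ 2 := by
    rw [show p - 3 = (p - 1) - 2 by ring, Real.rpow_sub hu0]
    congr 1
    exact Real.rpow_two u
  have key : u * u ^ 2 ≤ (u - 1) * (1 + u) ^ 2 := by nlinarith
  calc g p u = (u - 1) ^ (p - 1) / (u - 1) * (u / (1 + u) ^ 2) := by
        unfold g; rw [h1, e]
    _ ≤ u ^ (p - 1) / (u - 1) * (u / (1 + u) ^ 2) := by
        apply mul_le_mul_of_nonneg_right _
          (div_nonneg (le_of_lt hu0) (by nlinarith : (0:ℝ) ≤ (1 + u) ^ 2))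
        gcongr
        linarith
    _ = u ^ (p - 1) * u / ((u - 1) * (1 + u) ^ 2) := by
        rw [div_mul_div_comm]
    _ ≤ u ^ (p - 1) / u ^ 2 := by
        rw [div_le_div_iff₀ (by nlinarith : (0:ℝ) < (u - 1) * (1 + u) ^ 2)
          (by nlinarith : (0:ℝ) < u ^ 2)]
        nlinarith [mul_le_mul_of_nonneg_left key hpow]
    _ = u ^ (p - 3) := e2.symm

lemma g_int3 (hp1 : 1 < p) (hp2 : p < 2) : IntegrableOn (g p) (Ioi (2:ℝ)) := by
  refine Integrable.mono' (maj3_intOn hp1 hp2) ((g_meas p).aestronglyMeasurable) ?_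
  refine (ae_restrict_iff' measurableSet_Ioi).2 (ae_of_all _ fun u hu => ?_)
  rw [Real.norm_eq_abs, abs_of_nonneg (g_nonneg (by
    have : (2:ℝ) < u := hu
    linarith))]
  exact g_le3 hp1 hp2 u hu

lemma g_bound3 (hp1 : 1 < p) (hp2 : p < 2) :
    ∫ u in Ioi (2:ℝ), g p u ≤ 2 ^ (p - 2) / (2 - p) := by
  have h := setIntegral_mono_on (g_int3 hp1 hp2) (maj3_intOn hp1 hp2) measurableSet_Ioi
    (g_le3 hp1 hp2)
  refine h.trans (le_of_eq ?_)
  rw [integral_Ioi_rpow_of_lt (by linarith) (by norm_num : (0:ℝ) < 2)]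
  rw [show p - 3 + 1 = p - 2 by ring]
  rw [div_eq_div_iff (by linarith : p - 2 ≠ 0) (by linarith : 2 - p ≠ 0)]
  ring

end Stmt8Aux2

namespace Stmt8Main
open Stmt8Aux Stmt8Aux2

variable {p : ℝ}

lemma hset : Ici (0:ℝ) = (Icc 0 1 ∪ Ioc 1 2) ∪ Ioi 2 := by
  ext x
  simp only [mem_Ici, mem_union, mem_Icc, mem_Ioc, mem_Ioi]
  constructor
  · intro hx
    rcases le_or_gt x 1 with h | h
    · exact Or.inl (Or.inl ⟨hx, h⟩)
    · rcases le_or_gt x 2 with h2 | h2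
      · exact Or.inl (Or.inr ⟨h, h2⟩)
      · exact Or.inr h2
  · rintro ((⟨h, _⟩ | ⟨h, _⟩) | h) <;> linarith

lemma disj1 : Disjoint (Icc (0:ℝ) 1) (Ioc 1 2) := by
  rw [Set.disjoint_left]
  rintro x ⟨_, h1⟩ ⟨h2, _⟩
  linarith

lemma disj2 : Disjoint (Icc (0:ℝ) 1 ∪ Ioc 1 2) (Ioi 2) := by
  rw [Set.disjoint_left]
  rintro x (⟨_, h1⟩ | ⟨_, h1⟩) h2
  · exact absurd h2 (by simp; linarith)
  · exact absurd h2 (by simp; linarith)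

lemma g_int_total (hp1 : 1 < p) (hp2 : p < 2) : IntegrableOn (g p) (Ici (0:ℝ)) := by
  rw [hset]
  exact ((g_int1 hp1 hp2).union (g_int2 hp1 hp2)).union (g_int3 hp1 hp2)

lemma g_bound_total (hp1 : 1 < p) (hp2 : p < 2) :
    ∫ u in Ici (0:ℝ), g p u ≤
      (1/(4*(p-1)) + 1/(2*p) - 3/(4*(p+1))) + 1/(4*(p-1)) + 2 ^ (p-2) / (2-p) := by
  rw [hset, setIntegral_union disj2 measurableSet_Ioi
      ((g_int1 hp1 hp2).union (g_int2 hp1 hp2)) (g_int3 hp1 hp2),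
    setIntegral_union disj1 measurableSet_Ioc (g_int1 hp1 hp2) (g_int2 hp1 hp2)]
  have := g_bound1 hp1 hp2
  have := g_bound2 hp1 hp2
  have := g_bound3 hp1 hp2
  linarith

lemma two_rpow_le (hp1 : 1 < p) (hp2 : p < 2) : (2:ℝ) ^ (p - 2) ≤ p / 2 := by
  have h := convexOn_exp.2 (Set.mem_univ (-Real.log 2)) (Set.mem_univ 0)
    (by linarith : (0:ℝ) ≤ 2 - p) (by linarith : (0:ℝ) ≤ p - 1) (by ring)
  simp only [smul_eq_mul, mul_zero, add_zero, Real.exp_zero, mul_one] at h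
  have e : Real.exp ((2 - p) * -Real.log 2) = (2:ℝ) ^ (p - 2) := by
    rw [Real.rpow_def_of_pos (by norm_num : (0:ℝ) < 2)]
    congr 1
    ring
  have e2 : Real.exp (-Real.log 2) = 1/2 := by
    rw [Real.exp_neg, Real.exp_log (by norm_num : (0:ℝ) < 2)]
    norm_num
  rw [e, e2] at h
  linarith

lemma rat_ineq (hp1 : 1 < p) (hp2 : p < 2) :
    (1/(4*(p-1)) + 1/(2*p) - 3/(4*(p+1))) + 1/(4*(p-1)) + 2 ^ (p-2) / (2-p) + 1/2
      ≤ (p^2 - 2*p + 2) / (p*(p-1)*(2-p)) := by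
  have h2p : (2:ℝ) ^ (p-2) / (2-p) ≤ (p/2) / (2-p) := by
    gcongr
    exact two_rpow_le hp1 hp2
  have hd : (0:ℝ) < 36*p*(p-1)*(p+1)*(2-p) := by
    have h1 : (0:ℝ) < 36*p := by linarith
    have h2 : (0:ℝ) < p - 1 := by linarith
    have h3 : (0:ℝ) < p + 1 := by linarith
    have h4 : (0:ℝ) < 2 - p := by linarith
    exact mul_pos (mul_pos (mul_pos h1 h2) h3) h4
  have e : (p^2 - 2*p + 2) / (p*(p-1)*(2-p))
      - ((1/(4*(p-1)) + 1/(2*p) - 3/(4*(p+1))) + 1/(4*(p-1)) + (p/2) / (2-p) + 1/2)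
      = 9*(p-2)^2*(p+3) / (36*p*(p-1)*(p+1)*(2-p)) := by
    have n0 : p ≠ 0 := by linarith
    have n1 : p - 1 ≠ 0 := by linarith
    have n2 : p + 1 ≠ 0 := by linarith
    have n3 : 2 - p ≠ 0 := by linarith
    field_simp
    ring
  have hnum : (0:ℝ) ≤ 9*(p-2)^2*(p+3) := by nlinarith [sq_nonneg (p-2)]
  have hfrac : (0:ℝ) ≤ 9*(p-2)^2*(p+3) / (36*p*(p-1)*(p+1)*(2-p)) := div_nonneg hnum hd.le
  linarith

end Stmt8Main

open Stmt8Aux Stmt8Aux2 Stmt8Main Set in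
/-- For `p ∈ (1,2)`, the p-th moment `m_p = ∫_E |y₁−1|^p dν(y)` (horizontal-axis
part with density `(4/π)·u/((1-u)²(1+u)²)`, vertical-axis part with density
`(4/π)·v/(1+v²)²` and `|y₁−1| = 1` there) is finite and satisfies
`m_p ≤ (4/π)·(p²−2p+2)/(p(p−1)(2−p))`. -/
theorem stmt8 (p : ℝ) (hp1 : 1 < p) (hp2 : p < 2) :
    IntegrableOn (fun u : ℝ =>
        |u - 1| ^ p * ((4 / Real.pi) * u / ((1 - u) ^ 2 * (1 + u) ^ 2)))
      (Set.Ici 0) ∧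
    IntegrableOn (fun v : ℝ =>
        |(0 : ℝ) - 1| ^ p * ((4 / Real.pi) * v / (1 + v ^ 2) ^ 2))
      (Set.Ici 0) ∧
    (∫ u in Set.Ici (0 : ℝ),
        |u - 1| ^ p * ((4 / Real.pi) * u / ((1 - u) ^ 2 * (1 + u) ^ 2)))
      + (∫ v in Set.Ici (0 : ℝ),
        |(0 : ℝ) - 1| ^ p * ((4 / Real.pi) * v / (1 + v ^ 2) ^ 2))
      ≤ (4 / Real.pi) * (p ^ 2 - 2 * p + 2) / (p * (p - 1) * (2 - p)) := by
  have hπ : 0 < Real.pi := Real.pi_pos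
  set C : ℝ := 4 / Real.pi with hC
  have hCpos : 0 < C := by positivity
  have hFg : EqOn (fun u : ℝ => |u - 1| ^ p * (C * u / ((1 - u) ^ 2 * (1 + u) ^ 2)))
      (fun u => C * g p u) (Set.Ici 0) := by
    intro u hu
    have hu0 : (0:ℝ) ≤ u := hu
    by_cases h : u = 1
    · subst h
      norm_num [g, Real.zero_rpow (show p ≠ 0 by linarith),
        Real.zero_rpow (show p - 2 ≠ 0 by linarith)]
    · have habs : (0:ℝ) < |u - 1| := abs_pos.2 (sub_ne_zero.2 h)
      have key : |u - 1| ^ (p - 2) * (1 - u) ^ 2 = |u - 1| ^ p := by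
        have h2 : (1 - u) ^ 2 = |u - 1| ^ (2:ℕ) := by rw [sq_abs]; ring
        rw [h2, ← Real.rpow_natCast |u - 1| 2, ← Real.rpow_add habs]
        norm_num
      have h1u : (1:ℝ) - u ≠ 0 := by
        intro hcon; exact h (by linarith)
      have h2u : (1:ℝ) + u ≠ 0 := by positivity
      simp only [g]
      rw [← key]
      field_simp
  have hvert_eq : (fun v : ℝ => |(0:ℝ) - 1| ^ p * (C * v / (1 + v ^ 2) ^ 2))
      = fun v => C * (v / (1 + v ^ 2) ^ 2) := by
    funext v
    rw [show |(0:ℝ) - 1| = 1 by norm_num, Real.one_rpow]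
    ring
  have hCg : IntegrableOn (fun u : ℝ => C * g p u) (Set.Ici 0) :=
    (g_int_total hp1 hp2).const_mul C
  have hint1 : IntegrableOn (fun u : ℝ =>
      |u - 1| ^ p * (C * u / ((1 - u) ^ 2 * (1 + u) ^ 2))) (Set.Ici 0) :=
    hCg.congr_fun hFg.symm measurableSet_Ici
  refine ⟨hint1, ?_, ?_⟩
  · rw [hvert_eq]
    exact vert_integrable.const_mul C
  · rw [setIntegral_congr_fun measurableSet_Ici hFg, integral_const_mul, hvert_eq,
      integral_const_mul, vert_value]
    have hb := g_bound_total hp1 hp2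
    have hrat := rat_ineq hp1 hp2
    have hS : (∫ u in Set.Ici (0:ℝ), g p u) + 1/2
        ≤ (p ^ 2 - 2 * p + 2) / (p * (p - 1) * (2 - p)) := by linarith
    have hfin := mul_le_mul_of_nonneg_left hS hCpos.le
    rw [mul_add] at hfin
    rw [mul_div_assoc]
    linarith
end
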